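/- arXiv:1402.2848 — 4 statements merged into one kernel-verified Lean document; each statement's English description precedes it below -/
import Mathlib

section
/- Let n ≥ 2, let p > 1 be a real number and let k ≥ 1 be an integer with kp < n. Then there exists a constant C > 0, depending only on n, p and k, such that for every smooth compactly supported function u : ℝⁿ → ℝ one has ‖u‖_{L^{p_k}(ℝⁿ)} ≤ C ‖ |∂^k u| ‖_{L^p(ℝⁿ)}, where p_k = pn/(n − pk). -/
open MeasureTheory
open scoped NNReal ENNReal

set_option synthInstance.maxHeartbeats 1000000 in
set_option maxHeartbeats 2000000 in
private lemma stmt_1_aux (n : ℕ) (hn : 2 ≤ n) (p : ℝ) (hp : 1 < p) (k : ℕ)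
    (hkp : (k : ℝ) * p < n) :
    ∀ j ≤ k, ∃ C : ℝ≥0, 0 < C ∧
      ∀ u : EuclideanSpace ℝ (Fin n) → ℝ,
        ContDiff ℝ (⊤ : ℕ∞) u → HasCompactSupport u →
        eLpNorm (iteratedFDeriv ℝ (k - j) u) ((p * n / (n - p * j)).toNNReal) volume ≤
          C * eLpNorm (iteratedFDeriv ℝ k u) ((p * n / (n - p * (0:ℕ))).toNNReal) volume := by
  have h0p : (0:ℝ) < p := lt_trans one_pos hp
  have hn0 : (0:ℝ) < n := by positivity
  have hden : ∀ j : ℕ, j ≤ k → (0:ℝ) < n - p * j := by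
    intro j hj
    have : p * j ≤ (k:ℝ) * p := by
      rw [mul_comm]
      exact mul_le_mul_of_nonneg_right (by exact_mod_cast hj) h0p.le
    linarith
  have hone : ∀ j : ℕ, j ≤ k → 1 ≤ ((p * n / (n - p * j)).toNNReal : ℝ) := by
    intro j hj
    have h := hden j hj
    rw [Real.coe_toNNReal _ (div_nonneg (by positivity) h.le)]
    rw [le_div_iff₀ h]
    nlinarith
  intro j
  induction j with
  | zero =>
    intro _
    exact ⟨1, one_pos, fun u hu h2u => by simp⟩
  | succ j ih =>
    intro hj
    obtain ⟨C, hC, hCle⟩ := ih (le_of_lt (Nat.lt_of_succ_le hj))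
    set qj := (p * n / (n - p * j)).toNNReal with hqj
    set qj' := (p * n / (n - p * (j+1 : ℕ))).toNNReal with hqj'
    have hjk : j ≤ k := le_of_lt (Nat.lt_of_succ_le hj)
    have hdj := hden j hjk
    have hdj' := hden (j+1) hj
    have hcoej : (qj : ℝ) = p * n / (n - p * j) :=
      Real.coe_toNNReal _ (div_nonneg (by positivity) hdj.le)
    have hcoej' : (qj' : ℝ) = p * n / (n - p * (j+1:ℕ)) :=
      Real.coe_toNNReal _ (div_nonneg (by positivity) hdj'.le)
    have hfr : 0 < Module.finrank ℝ (EuclideanSpace ℝ (Fin n)) := by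
      rw [finrank_euclideanSpace_fin]; omega
    have hp' : (qj' : ℝ)⁻¹ = (qj : ℝ)⁻¹ - ((Module.finrank ℝ (EuclideanSpace ℝ (Fin n)) : ℝ))⁻¹ := by
      rw [hcoej, hcoej', finrank_euclideanSpace_fin]
      push_cast
      field_simp
      ring
    set m := k - (j+1) with hm
    have hm1 : m + 1 = k - j := by omega
    set F := ContinuousMultilinearMap ℝ (fun _ : Fin m => EuclideanSpace ℝ (Fin n)) ℝ with hF
    haveI : FiniteDimensional ℝ F :=
      Module.Finite.of_injective (ContinuousMultilinearMap.toMultilinearMapLinear (R' := ℝ))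
        ContinuousMultilinearMap.toMultilinearMap_injective
    set D := SNormLESNormFDerivOfEqConst (E := EuclideanSpace ℝ (Fin n)) F volume qj with hD
    refine ⟨(D + 1) * C, by positivity, fun u hu h2u => ?_⟩
    set v : EuclideanSpace ℝ (Fin n) → F := iteratedFDeriv ℝ m u with hv
    have hv1 : ContDiff ℝ 1 v := hu.iteratedFDeriv_right (by exact_mod_cast le_top)
    have h2v : HasCompactSupport v := h2u.iteratedFDeriv m
    have hone' : 1 ≤ qj := by exact_mod_cast hone j hjk
    have step := eLpNorm_le_eLpNorm_fderiv_of_eq (F := F) (μ := volume) hv1 h2v hone' hfr hp'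
    have heq : eLpNorm (fderiv ℝ v) qj volume
        = eLpNorm (iteratedFDeriv ℝ (k - j) u) qj volume := by
      rw [← eLpNorm_norm (fderiv ℝ v), ← eLpNorm_norm (iteratedFDeriv ℝ (k - j) u)]
      refine eLpNorm_congr_ae (Filter.Eventually.of_forall fun x => ?_)
      have h := norm_fderiv_iteratedFDeriv (𝕜 := ℝ) (f := u) (x := x) (n := m)
      rw [hm1] at h
      exact h
    calc eLpNorm (iteratedFDeriv ℝ m u) qj' volume
        ≤ D * eLpNorm (fderiv ℝ v) qj volume := step
      _ = D * eLpNorm (iteratedFDeriv ℝ (k - j) u) qj volume := by rw [heq]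
      _ ≤ D * (C * eLpNorm (iteratedFDeriv ℝ k u) ((p * n / (n - p * (0:ℕ))).toNNReal) volume) := by
          gcongr
          exact hCle u hu h2u
      _ ≤ ((D + 1) * C : ℝ≥0) * eLpNorm (iteratedFDeriv ℝ k u)
            ((p * n / (n - p * (0:ℕ))).toNNReal) volume := by
          rw [← mul_assoc]
          gcongr
          push_cast
          gcongr
          exact le_self_add

/-- **Iterated Gagliardo–Nirenberg–Sobolev inequality**: for `n ≥ 2`, `p > 1`, `k ≥ 1`
with `kp < n`, there is `C > 0` (depending only on `n, p, k`) such that for every smooth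
compactly supported `u : ℝⁿ → ℝ`, `‖u‖_{L^{p_k}} ≤ C ‖ |∂^k u| ‖_{L^p}` with
`p_k = pn/(n − pk)`. -/
theorem stmt_1 (n : ℕ) (hn : 2 ≤ n) (p : ℝ) (hp : 1 < p) (k : ℕ) (hk : 1 ≤ k)
    (hkp : (k : ℝ) * p < n) :
    ∃ C : ℝ, 0 < C ∧
      ∀ u : EuclideanSpace ℝ (Fin n) → ℝ,
        ContDiff ℝ (⊤ : ℕ∞) u → HasCompactSupport u →
        eLpNorm u (ENNReal.ofReal (p * n / (n - p * k))) volume ≤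
          ENNReal.ofReal C *
            eLpNorm (fun x => ‖iteratedFDeriv ℝ k u x‖) (ENNReal.ofReal p) volume := by
  obtain ⟨C, hC, hCle⟩ := stmt_1_aux n hn p hp k hkp k le_rfl
  refine ⟨C, hC, fun u hu h2u => ?_⟩
  have h0p : (0:ℝ) < p := lt_trans one_pos hp
  have := hCle u hu h2u
  have hq0 : (p * n / (n - p * (0:ℕ))).toNNReal = p.toNNReal := by
    congr 1
    have hn0 : (0:ℝ) < n := by positivity
    field_simp
    simp [hn0.ne']
  rw [hq0, Nat.sub_self] at this
  have hL : eLpNorm u (ENNReal.ofReal (p * n / (n - p * k))) volume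
      = eLpNorm (iteratedFDeriv ℝ 0 u) ((p * n / (n - p * k)).toNNReal) volume := by
    rw [ENNReal.ofReal]
    rw [← eLpNorm_norm (iteratedFDeriv ℝ 0 u), ← eLpNorm_norm u]
    exact eLpNorm_congr_ae (Filter.Eventually.of_forall fun x => by
      simp [norm_iteratedFDeriv_zero])
  have hR : eLpNorm (fun x => ‖iteratedFDeriv ℝ k u x‖) (ENNReal.ofReal p) volume
      = eLpNorm (iteratedFDeriv ℝ k u) (p.toNNReal) volume := by
    rw [ENNReal.ofReal, eLpNorm_norm]
  rw [hL, hR]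
  calc eLpNorm (iteratedFDeriv ℝ 0 u) ((p * n / (n - p * k)).toNNReal) volume
      ≤ C * eLpNorm (iteratedFDeriv ℝ k u) (p.toNNReal) volume := this
    _ = ENNReal.ofReal C * eLpNorm (iteratedFDeriv ℝ k u) (p.toNNReal) volume := by
        rw [ENNReal.ofReal_coe_nnreal]
end

section
/- Let ω : ℝ × (0,∞) × ℝ → ℝ, (t,ρ,z) ↦ ω(t,ρ,z), be a smooth function and set ω̄ := ω/ρ⁴. Then the pointwise identity ρ⁻⁴ ( −∂²_t ω + ∂²_ρ ω + ∂²_z ω + ρ⁻¹ ∂_ρ ω − 4ρ⁻¹ ∂_ρ ω ) = −∂²_t ω̄ + ∂²_ρ ω̄ + ∂²_z ω̄ + 5ρ⁻¹ ∂_ρ ω̄ holds on ℝ × (0,∞) × ℝ. Consequently ω satisfies the axially symmetric linearized twist equation −∂²_t ω + ³Δω = 4ρ⁻¹∂_ρω if and only if ω̄ satisfies the flat wave equation in seven space dimensions, −∂²_t ω̄ + ⁽⁷⁾Δ ω̄ = 0. -/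
noncomputable section

/-- Functions of `(t, ρ, z)`. -/
abbrev F3 := ℝ → ℝ → ℝ → ℝ

/-- Partial derivative with respect to `t`. -/
noncomputable def pdT (f : F3) : F3 := fun t ρ z => deriv (fun s => f s ρ z) t

/-- Partial derivative with respect to `ρ`. -/
noncomputable def pdR (f : F3) : F3 := fun t ρ z => deriv (fun s => f t s z) ρ

/-- Partial derivative with respect to `z`. -/
noncomputable def pdZ (f : F3) : F3 := fun t ρ z => deriv (fun s => f t ρ s) z

/-- The flat 3-dimensional Laplacian on axially symmetric functions,
`³Δf = ∂²_ρ f + ∂²_z f + ρ⁻¹ ∂_ρ f`. -/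
noncomputable def lap3 (f : F3) : F3 :=
  fun t ρ z => pdR (pdR f) t ρ z + pdZ (pdZ f) t ρ z + ρ⁻¹ * pdR f t ρ z

/-- Smoothness on `ℝ_t × (0,∞)_ρ × ℝ_z`. -/
def SmoothOnHalf (f : F3) : Prop :=
  ContDiffOn ℝ (⊤ : ℕ∞) (fun q : ℝ × ℝ × ℝ => f q.1 q.2.1 q.2.2)
    {q : ℝ × ℝ × ℝ | 0 < q.2.1}

/-- Smoothness along the radial line. -/
lemma line_smooth (ω : F3) (hω : SmoothOnHalf ω) (t z : ℝ) :
    ContDiffOn ℝ (⊤ : ℕ∞) (fun s => ω t s z) (Set.Ioi 0) := by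
  have h : (fun s : ℝ => ω t s z)
      = (fun q : ℝ × ℝ × ℝ => ω q.1 q.2.1 q.2.2) ∘ (fun s : ℝ => (t, s, z)) := rfl
  rw [h]
  exact hω.comp ((contDiff_const.prodMk (contDiff_id.prodMk contDiff_const)).contDiffOn)
    (fun s hs => hs)

/-- **Reduction of the twist equation to a 7-dimensional wave equation**: for smooth
`ω` on `ℝ × (0,∞) × ℝ` and `ω̄ = ω/ρ⁴`, the pointwise identity
`ρ⁻⁴(−∂²_tω + ∂²_ρω + ∂²_zω + ρ⁻¹∂_ρω − 4ρ⁻¹∂_ρω) = −∂²_tω̄ + ∂²_ρω̄ + ∂²_zω̄ + 5ρ⁻¹∂_ρω̄`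
holds, and consequently `−∂²_tω + ³Δω = 4ρ⁻¹∂_ρω` iff `−∂²_tω̄ + ⁽⁷⁾Δω̄ = 0`. -/
theorem stmt_4 (ω : F3) (hω : SmoothOnHalf ω) (ωb : F3)
    (hωb : ωb = fun t ρ z => ω t ρ z / ρ ^ 4) :
    (∀ t ρ z : ℝ, 0 < ρ →
      (ρ ^ 4)⁻¹ * (-pdT (pdT ω) t ρ z + pdR (pdR ω) t ρ z + pdZ (pdZ ω) t ρ z
          + ρ⁻¹ * pdR ω t ρ z - 4 * ρ⁻¹ * pdR ω t ρ z)
        = -pdT (pdT ωb) t ρ z + pdR (pdR ωb) t ρ z + pdZ (pdZ ωb) t ρ z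
          + 5 * ρ⁻¹ * pdR ωb t ρ z) ∧
    ((∀ t ρ z : ℝ, 0 < ρ →
        -pdT (pdT ω) t ρ z + lap3 ω t ρ z = 4 * ρ⁻¹ * pdR ω t ρ z) ↔
     (∀ t ρ z : ℝ, 0 < ρ →
        -pdT (pdT ωb) t ρ z + (pdR (pdR ωb) t ρ z + pdZ (pdZ ωb) t ρ z
          + 5 * ρ⁻¹ * pdR ωb t ρ z) = 0)) := by
  subst hωb
  -- second t-derivative
  have eT : ∀ t ρ z : ℝ, pdT (pdT (fun t ρ z => ω t ρ z / ρ ^ 4)) t ρ z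
      = pdT (pdT ω) t ρ z / ρ ^ 4 := by
    intro t ρ z
    have e1 : ∀ s : ℝ, pdT (fun t ρ z => ω t ρ z / ρ ^ 4) s ρ z
        = pdT ω s ρ z / ρ ^ 4 := by
      intro s
      simp only [pdT]
      exact deriv_div_const _
    simp only [pdT, deriv_div_const]
  -- second z-derivative
  have eZ : ∀ t ρ z : ℝ, pdZ (pdZ (fun t ρ z => ω t ρ z / ρ ^ 4)) t ρ z
      = pdZ (pdZ ω) t ρ z / ρ ^ 4 := by
    intro t ρ z
    have e1 : ∀ s : ℝ, pdZ (fun t ρ z => ω t ρ z / ρ ^ 4) t ρ s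
        = pdZ ω t ρ s / ρ ^ 4 := by
      intro s
      simp only [pdZ]
      exact deriv_div_const _
    simp only [pdZ, deriv_div_const]
  -- differentiability facts
  have hd1 : ∀ t z : ℝ, ∀ ρ : ℝ, 0 < ρ →
      DifferentiableAt ℝ (fun s => ω t s z) ρ := fun t z ρ hρ =>
    ((line_smooth ω hω t z).differentiableOn (by simp)).differentiableAt
      (isOpen_Ioi.mem_nhds hρ)
  have hd2 : ∀ t z : ℝ, ∀ ρ : ℝ, 0 < ρ →
      DifferentiableAt ℝ (fun s => pdR ω t s z) ρ := by
    intro t z ρ hρ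
    have h2 : ContDiffOn ℝ 2 (fun s => ω t s z) (Set.Ioi 0) :=
      (line_smooth ω hω t z).of_le (by
        rw [show ((2:WithTop ℕ∞)) = ((2:ℕ∞) : WithTop ℕ∞) from rfl]
        exact WithTop.coe_le_coe.mpr le_top)
    have h := (h2.deriv_of_isOpen (m := 1) isOpen_Ioi (by norm_num)).differentiableOn
      one_ne_zero
    exact h.differentiableAt (isOpen_Ioi.mem_nhds hρ)
  -- first ρ-derivative
  have eR1 : ∀ t z : ℝ, ∀ ρ : ℝ, 0 < ρ →
      pdR (fun t ρ z => ω t ρ z / ρ ^ 4) t ρ z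
        = pdR ω t ρ z / ρ ^ 4 - 4 * ω t ρ z / ρ ^ 5 := by
    intro t z ρ hρ
    have h4 : HasDerivAt (fun s : ℝ => s ^ 4) (4 * ρ ^ 3) ρ := by
      simpa using hasDerivAt_pow 4 ρ
    have h := ((hd1 t z ρ hρ).hasDerivAt.div h4 (pow_ne_zero 4 hρ.ne')).deriv
    simp only [pdR] at h ⊢
    rw [show (fun s => ω t s z / s ^ 4) = ((fun s => ω t s z) / fun s => s ^ 4) from rfl, h]
    have hρ4 : (ρ : ℝ) ^ 4 ≠ 0 := pow_ne_zero _ hρ.ne'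
    field_simp
  -- second ρ-derivative
  have eR2 : ∀ t z : ℝ, ∀ ρ : ℝ, 0 < ρ →
      pdR (pdR (fun t ρ z => ω t ρ z / ρ ^ 4)) t ρ z
        = pdR (pdR ω) t ρ z / ρ ^ 4 - 8 * pdR ω t ρ z / ρ ^ 5
          + 20 * ω t ρ z / ρ ^ 6 := by
    intro t z ρ hρ
    have hev : (fun s => pdR (fun t ρ z => ω t ρ z / ρ ^ 4) t s z)
        =ᶠ[nhds ρ] fun s => pdR ω t s z / s ^ 4 - 4 * ω t s z / s ^ 5 := by
      filter_upwards [isOpen_Ioi.mem_nhds hρ] with s hs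
      exact eR1 t z s hs
    have h4 : HasDerivAt (fun s : ℝ => s ^ 4) (4 * ρ ^ 3) ρ := by
      simpa using hasDerivAt_pow 4 ρ
    have h5 : HasDerivAt (fun s : ℝ => s ^ 5) (5 * ρ ^ 4) ρ := by
      simpa using hasDerivAt_pow 5 ρ
    have hA := (hd2 t z ρ hρ).hasDerivAt.div h4 (pow_ne_zero 4 hρ.ne')
    have hB := (((hd1 t z ρ hρ).hasDerivAt.const_mul (4:ℝ)).div h5
      (pow_ne_zero 5 hρ.ne'))
    have h := (hA.sub hB).deriv
    have hkey : pdR (pdR (fun t ρ z => ω t ρ z / ρ ^ 4)) t ρ z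
        = deriv (fun s => pdR ω t s z / s ^ 4 - 4 * ω t s z / s ^ 5) ρ := by
      simp only [pdR]
      exact hev.deriv_eq
    rw [hkey, show (fun s => pdR ω t s z / s ^ 4 - 4 * ω t s z / s ^ 5) = (((fun s => pdR ω t s z) / fun s => s ^ 4) - (fun y => 4 * ω t y z) / fun s => s ^ 5) from rfl, h]
    simp only [pdR]
    have hρ0 : (ρ : ℝ) ≠ 0 := hρ.ne'
    field_simp
    ring
  -- the pointwise identity
  have main : ∀ t ρ z : ℝ, 0 < ρ →
      (ρ ^ 4)⁻¹ * (-pdT (pdT ω) t ρ z + pdR (pdR ω) t ρ z + pdZ (pdZ ω) t ρ z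
          + ρ⁻¹ * pdR ω t ρ z - 4 * ρ⁻¹ * pdR ω t ρ z)
        = -pdT (pdT (fun t ρ z => ω t ρ z / ρ ^ 4)) t ρ z
          + pdR (pdR (fun t ρ z => ω t ρ z / ρ ^ 4)) t ρ z
          + pdZ (pdZ (fun t ρ z => ω t ρ z / ρ ^ 4)) t ρ z
          + 5 * ρ⁻¹ * pdR (fun t ρ z => ω t ρ z / ρ ^ 4) t ρ z := by
    intro t ρ z hρ
    rw [eT, eZ, eR1 t z ρ hρ, eR2 t z ρ hρ]
    have hρ0 : (ρ : ℝ) ≠ 0 := hρ.ne'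
    field_simp
    ring
  refine ⟨main, ?_⟩
  constructor
  · intro H t ρ z hρ
    have hm := main t ρ z hρ
    have hw := H t ρ z hρ
    simp only [lap3] at hw
    have : (ρ ^ 4)⁻¹ * (-pdT (pdT ω) t ρ z + pdR (pdR ω) t ρ z + pdZ (pdZ ω) t ρ z
        + ρ⁻¹ * pdR ω t ρ z - 4 * ρ⁻¹ * pdR ω t ρ z) = 0 := by
      rw [show -pdT (pdT ω) t ρ z + pdR (pdR ω) t ρ z + pdZ (pdZ ω) t ρ z
        + ρ⁻¹ * pdR ω t ρ z - 4 * ρ⁻¹ * pdR ω t ρ z = 0 by linarith]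
      ring
    linarith [this, hm]
  · intro H t ρ z hρ
    have hm := main t ρ z hρ
    have hw := H t ρ z hρ
    have h0 : (ρ ^ 4)⁻¹ * (-pdT (pdT ω) t ρ z + pdR (pdR ω) t ρ z + pdZ (pdZ ω) t ρ z
        + ρ⁻¹ * pdR ω t ρ z - 4 * ρ⁻¹ * pdR ω t ρ z) = 0 := by linarith
    have hρ4 : ((ρ : ℝ) ^ 4)⁻¹ ≠ 0 := inv_ne_zero (pow_ne_zero _ hρ.ne')
    have h1 : -pdT (pdT ω) t ρ z + pdR (pdR ω) t ρ z + pdZ (pdZ ω) t ρ z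
        + ρ⁻¹ * pdR ω t ρ z - 4 * ρ⁻¹ * pdR ω t ρ z = 0 :=
      (mul_eq_zero.mp h0).resolve_left hρ4
    simp only [lap3]
    linarith
end
end

section
/- Let ω : ℝ × (0,∞) × ℝ → ℝ, (t,ρ,z) ↦ ω(t,ρ,z), be a smooth function and set ω̄ := ω/ρ⁴. Then the pointwise identity 2( (∂_t ω̄)² + (∂_ρ ω̄)² + (∂_z ω̄)² ) ρ⁵ − 2ρ⁻³ ( (∂_t ω)² + (∂_ρ ω)² + (∂_z ω)² ) = −∂_ρ ( 8 ω² / ρ⁴ ) holds on ℝ × (0,∞) × ℝ; in particular, the canonical 7-dimensional wave-energy density of ω̄ and the twist energy density of ω differ by a total ρ-derivative. -/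
noncomputable section

/-- **Energy densities differ by a boundary term**: for smooth `ω` on `ℝ × (0,∞) × ℝ`
and `ω̄ = ω/ρ⁴`, the canonical 7-dimensional wave-energy density of `ω̄` and the twist
energy density of `ω` differ by the total `ρ`-derivative `−∂_ρ(8ω²/ρ⁴)`. -/
theorem stmt_5 (ω : F3) (hω : SmoothOnHalf ω) (ωb : F3)
    (hωb : ωb = fun t ρ z => ω t ρ z / ρ ^ 4) :
    ∀ t ρ z : ℝ, 0 < ρ →
      2 * ((pdT ωb t ρ z) ^ 2 + (pdR ωb t ρ z) ^ 2 + (pdZ ωb t ρ z) ^ 2) * ρ ^ 5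
        - 2 * (ρ ^ 3)⁻¹ * ((pdT ω t ρ z) ^ 2 + (pdR ω t ρ z) ^ 2 + (pdZ ω t ρ z) ^ 2)
      = -pdR (fun t ρ z => 8 * (ω t ρ z) ^ 2 / ρ ^ 4) t ρ z := by
  intro t ρ z hρ
  have hρ0 : ρ ≠ 0 := hρ.ne'
  have hρ4 : ρ ^ 4 ≠ 0 := pow_ne_zero _ hρ0
  -- differentiability in ρ
  have hdR : DifferentiableAt ℝ (fun s => ω t s z) ρ := by
    have hopen : IsOpen {q : ℝ × ℝ × ℝ | 0 < q.2.1} := by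
      have : {q : ℝ × ℝ × ℝ | 0 < q.2.1} = (fun q : ℝ × ℝ × ℝ => q.2.1) ⁻¹' Set.Ioi 0 := rfl
      rw [this]
      exact (continuous_fst.comp continuous_snd).isOpen_preimage _ isOpen_Ioi
    have hmem : ((t, ρ, z) : ℝ × ℝ × ℝ) ∈ {q : ℝ × ℝ × ℝ | 0 < q.2.1} := hρ
    have hca := (hω.contDiffAt (hopen.mem_nhds hmem)).differentiableAt (by simp)
    have hline : DifferentiableAt ℝ (fun s : ℝ => ((t, s, z) : ℝ × ℝ × ℝ)) ρ := by
      apply DifferentiableAt.prodMk (differentiableAt_const _)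
      exact DifferentiableAt.prodMk differentiableAt_id (differentiableAt_const _)
    exact hca.comp ρ hline
  -- derivative formulas
  have hpTb : pdT ωb t ρ z = pdT ω t ρ z / ρ ^ 4 := by
    simp only [pdT, hωb]; exact deriv_div_const _
  have hpZb : pdZ ωb t ρ z = pdZ ω t ρ z / ρ ^ 4 := by
    simp only [pdZ, hωb]; exact deriv_div_const _
  have hpow : deriv (fun s : ℝ => s ^ 4) ρ = 4 * ρ ^ 3 := by
    norm_num [deriv_pow]
  have hpRb : pdR ωb t ρ z
      = (pdR ω t ρ z * ρ ^ 4 - ω t ρ z * (4 * ρ ^ 3)) / (ρ ^ 4) ^ 2 := by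
    simp only [pdR, hωb]
    rw [deriv_fun_div hdR (differentiableAt_pow 4) hρ4, hpow]
  have hpRq : pdR (fun t ρ z => 8 * (ω t ρ z) ^ 2 / ρ ^ 4) t ρ z
      = (8 * (2 * ω t ρ z * pdR ω t ρ z) * ρ ^ 4
          - 8 * (ω t ρ z) ^ 2 * (4 * ρ ^ 3)) / (ρ ^ 4) ^ 2 := by
    simp only [pdR]
    rw [deriv_fun_div ((differentiableAt_const (8:ℝ)).fun_mul (hdR.fun_pow 2))
        (differentiableAt_pow 4) hρ4, hpow]
    congr 1
    rw [deriv_const_mul _ (hdR.fun_pow 2), deriv_fun_pow hdR]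
    ring
  rw [hpTb, hpZb, hpRb, hpRq]
  field_simp
  ring
end
end

section
/- Let (σ₁, β₁, χ₁) be smooth fields on ℝ_t × ℝ²₊ — a function σ₁, a vector field β₁^A, and a symmetric trace-free 2-tensor χ₁AB — satisfying, with p := ∂_tσ₁ − 2β₁^ρ/ρ, the equations (E1) −∂_t p + ³Δσ₁ = 0, the momentum constraint (M) ∂^Bχ₁AB = −p ∂_Aρ (for all t), and the shift equation (S) (𝓛β₁)_AB = 2ρ⁻¹ χ₁AB. Then the energy density ε_σ := (2p² + 2|∂σ₁|² + 4ρ⁻²χ₁^{AB}χ₁AB)ρ satisfies the pointwise divergence identity ∂_t ε_σ = ∂_A t^A on ℝ_t × ℝ²₊, where t_A := 4ρ (∂_tσ₁) ∂_Aσ₁ + 8 β₁^B ∂_tχ₁AB. -/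
noncomputable section

/-- Spatial partial derivative in direction `A` (`A = 0` is `ρ`, `A = 1` is `z`). -/
noncomputable def pdA (A : Fin 2) : F3 → F3 := if A = 0 then pdR else pdZ

namespace Aux

def U : Set (ℝ × ℝ × ℝ) := {q | 0 < q.2.1}

lemma isOpen_U : IsOpen U :=
  isOpen_lt continuous_const (continuous_fst.comp continuous_snd)

def toF (f : F3) : ℝ × ℝ × ℝ → ℝ := fun q => f q.1 q.2.1 q.2.2

lemma mem_nhds_U {t ρ z : ℝ} (hρ : 0 < ρ) : U ∈ nhds (t, ρ, z) :=
  isOpen_U.mem_nhds hρ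

lemma contDiffAt (f : F3) (hf : SmoothOnHalf f) {t ρ z : ℝ} (hρ : 0 < ρ) :
    ContDiffAt ℝ (⊤ : ℕ∞) (toF f) (t, ρ, z) :=
  hf.contDiffAt (mem_nhds_U hρ)

lemma diffAt (f : F3) (hf : SmoothOnHalf f) {t ρ z : ℝ} (hρ : 0 < ρ) :
    DifferentiableAt ℝ (toF f) (t, ρ, z) :=
  (contDiffAt f hf hρ).differentiableAt (by simp)

-- curves
lemma curveT (t ρ z : ℝ) : HasDerivAt (fun s : ℝ => (s, ρ, z)) ((1 : ℝ), (0 : ℝ), (0 : ℝ)) t :=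
  (hasDerivAt_id t).prodMk (hasDerivAt_const t (ρ, z))

lemma curveR (t ρ z : ℝ) : HasDerivAt (fun s : ℝ => (t, s, z)) ((0 : ℝ), (1 : ℝ), (0 : ℝ)) ρ :=
  (hasDerivAt_const ρ t).prodMk ((hasDerivAt_id ρ).prodMk (hasDerivAt_const ρ z))

lemma curveZ (t ρ z : ℝ) : HasDerivAt (fun s : ℝ => (t, ρ, s)) ((0 : ℝ), (0 : ℝ), (1 : ℝ)) z :=
  (hasDerivAt_const z t).prodMk ((hasDerivAt_const z ρ).prodMk (hasDerivAt_id z))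

lemma hasDerivT (f : F3) (hf : SmoothOnHalf f) {t ρ z : ℝ} (hρ : 0 < ρ) :
    HasDerivAt (fun s => f s ρ z) (pdT f t ρ z) t := by
  have H := (diffAt f hf hρ).hasFDerivAt.comp_hasDerivAt t (curveT t ρ z)
  exact H.differentiableAt.hasDerivAt

lemma hasDerivR (f : F3) (hf : SmoothOnHalf f) {t ρ z : ℝ} (hρ : 0 < ρ) :
    HasDerivAt (fun s => f t s z) (pdR f t ρ z) ρ := by
  have H := (diffAt f hf hρ).hasFDerivAt.comp_hasDerivAt ρ (curveR t ρ z)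
  exact H.differentiableAt.hasDerivAt

lemma hasDerivZ (f : F3) (hf : SmoothOnHalf f) {t ρ z : ℝ} (hρ : 0 < ρ) :
    HasDerivAt (fun s => f t ρ s) (pdZ f t ρ z) z := by
  have H := (diffAt f hf hρ).hasFDerivAt.comp_hasDerivAt z (curveZ t ρ z)
  exact H.differentiableAt.hasDerivAt

lemma pdT_eq_fderiv (f : F3) (hf : SmoothOnHalf f) {t ρ z : ℝ} (hρ : 0 < ρ) :
    pdT f t ρ z = fderiv ℝ (toF f) (t, ρ, z) ((1 : ℝ), (0 : ℝ), (0 : ℝ)) :=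
  by have H := ((diffAt f hf hρ).hasFDerivAt.comp_hasDerivAt t (curveT t ρ z)).deriv; exact H

lemma pdR_eq_fderiv (f : F3) (hf : SmoothOnHalf f) {t ρ z : ℝ} (hρ : 0 < ρ) :
    pdR f t ρ z = fderiv ℝ (toF f) (t, ρ, z) ((0 : ℝ), (1 : ℝ), (0 : ℝ)) :=
  by have H := ((diffAt f hf hρ).hasFDerivAt.comp_hasDerivAt ρ (curveR t ρ z)).deriv; exact H

lemma pdZ_eq_fderiv (f : F3) (hf : SmoothOnHalf f) {t ρ z : ℝ} (hρ : 0 < ρ) :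
    pdZ f t ρ z = fderiv ℝ (toF f) (t, ρ, z) ((0 : ℝ), (0 : ℝ), (1 : ℝ)) :=
  by have H := ((diffAt f hf hρ).hasFDerivAt.comp_hasDerivAt z (curveZ t ρ z)).deriv; exact H

lemma smooth_fderiv_apply (f : F3) (hf : SmoothOnHalf f) (v : ℝ × ℝ × ℝ) :
    ContDiffOn ℝ (⊤ : ℕ∞) (fun q => fderiv ℝ (toF f) q v) U := by
  have h1 : ContDiffOn ℝ (⊤ : ℕ∞) (fun q => fderiv ℝ (toF f) q) U :=
    hf.fderiv_of_isOpen isOpen_U (by simp)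
  exact h1.clm_apply contDiffOn_const

lemma smooth_pdT (f : F3) (hf : SmoothOnHalf f) : SmoothOnHalf (pdT f) := by
  refine (smooth_fderiv_apply f hf ((1:ℝ),(0:ℝ),(0:ℝ))).congr ?_
  rintro ⟨t, ρ, z⟩ hq
  exact pdT_eq_fderiv f hf hq

lemma smooth_pdR (f : F3) (hf : SmoothOnHalf f) : SmoothOnHalf (pdR f) := by
  refine (smooth_fderiv_apply f hf ((0:ℝ),(1:ℝ),(0:ℝ))).congr ?_
  rintro ⟨t, ρ, z⟩ hq
  exact pdR_eq_fderiv f hf hq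

lemma smooth_pdZ (f : F3) (hf : SmoothOnHalf f) : SmoothOnHalf (pdZ f) := by
  refine (smooth_fderiv_apply f hf ((0:ℝ),(0:ℝ),(1:ℝ))).congr ?_
  rintro ⟨t, ρ, z⟩ hq
  exact pdZ_eq_fderiv f hf hq

-- second derivative
lemma fderiv_fderiv_apply (f : F3) (hf : SmoothOnHalf f) {t ρ z : ℝ} (hρ : 0 < ρ)
    (v w : ℝ × ℝ × ℝ) :
    fderiv ℝ (fun q => fderiv ℝ (toF f) q v) (t, ρ, z) w
      = fderiv ℝ (fderiv ℝ (toF f)) (t, ρ, z) w v := by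
  have hd : DifferentiableAt ℝ (fderiv ℝ (toF f)) (t, ρ, z) := by
    have h2 : ContDiffAt ℝ ((⊤:ℕ∞) : WithTop ℕ∞) (fderiv ℝ (toF f)) (t, ρ, z) :=
      (contDiffAt f hf (t := t) (z := z) hρ).fderiv_right (by exact_mod_cast le_top)
    exact h2.differentiableAt (by simp)
  have H := ((ContinuousLinearMap.apply ℝ ℝ v).hasFDerivAt.comp (t, ρ, z) hd.hasFDerivAt)
  simpa using H.fderiv ▸ rfl

end Aux

namespace Aux2
open Aux

lemma schwarz_gen (f : F3) (hf : SmoothOnHalf f) {t ρ z : ℝ} (hρ : 0 < ρ)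
    (v w : ℝ × ℝ × ℝ) :
    fderiv ℝ (fun q => fderiv ℝ (toF f) q v) (t, ρ, z) w
      = fderiv ℝ (fun q => fderiv ℝ (toF f) q w) (t, ρ, z) v := by
  rw [fderiv_fderiv_apply f hf hρ v w, fderiv_fderiv_apply f hf hρ w v]
  exact ((contDiffAt f hf hρ).isSymmSndFDerivAt (by rw [minSmoothness_of_isRCLikeNormedField]; exact WithTop.coe_le_coe.mpr le_top)) w v

lemma ev_pdT (f : F3) (hf : SmoothOnHalf f) {t ρ z : ℝ} (hρ : 0 < ρ) :
    toF (pdT f) =ᶠ[nhds (t, ρ, z)]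
      fun q => fderiv ℝ (toF f) q ((1 : ℝ), (0 : ℝ), (0 : ℝ)) := by
  filter_upwards [mem_nhds_U hρ]
  rintro ⟨a, b, c⟩ hq
  exact pdT_eq_fderiv f hf hq

lemma ev_pdR (f : F3) (hf : SmoothOnHalf f) {t ρ z : ℝ} (hρ : 0 < ρ) :
    toF (pdR f) =ᶠ[nhds (t, ρ, z)]
      fun q => fderiv ℝ (toF f) q ((0 : ℝ), (1 : ℝ), (0 : ℝ)) := by
  filter_upwards [mem_nhds_U hρ]
  rintro ⟨a, b, c⟩ hq
  exact pdR_eq_fderiv f hf hq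

lemma ev_pdZ (f : F3) (hf : SmoothOnHalf f) {t ρ z : ℝ} (hρ : 0 < ρ) :
    toF (pdZ f) =ᶠ[nhds (t, ρ, z)]
      fun q => fderiv ℝ (toF f) q ((0 : ℝ), (0 : ℝ), (1 : ℝ)) := by
  filter_upwards [mem_nhds_U hρ]
  rintro ⟨a, b, c⟩ hq
  exact pdZ_eq_fderiv f hf hq

lemma schwarz_TR (f : F3) (hf : SmoothOnHalf f) {t ρ z : ℝ} (hρ : 0 < ρ) :
    pdR (pdT f) t ρ z = pdT (pdR f) t ρ z := by
  calc pdR (pdT f) t ρ z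
      = fderiv ℝ (toF (pdT f)) (t, ρ, z) ((0:ℝ), (1:ℝ), (0:ℝ)) :=
        pdR_eq_fderiv (pdT f) (smooth_pdT f hf) hρ
    _ = fderiv ℝ (fun q => fderiv ℝ (toF f) q ((1:ℝ),(0:ℝ),(0:ℝ))) (t, ρ, z) ((0:ℝ),(1:ℝ),(0:ℝ)) := by
        rw [(ev_pdT f hf hρ).fderiv_eq]
    _ = fderiv ℝ (fun q => fderiv ℝ (toF f) q ((0:ℝ),(1:ℝ),(0:ℝ))) (t, ρ, z) ((1:ℝ),(0:ℝ),(0:ℝ)) :=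
        schwarz_gen f hf hρ _ _
    _ = fderiv ℝ (toF (pdR f)) (t, ρ, z) ((1:ℝ),(0:ℝ),(0:ℝ)) := by
        rw [(ev_pdR f hf hρ).fderiv_eq]
    _ = pdT (pdR f) t ρ z := (pdT_eq_fderiv (pdR f) (smooth_pdR f hf) hρ).symm

lemma schwarz_TZ (f : F3) (hf : SmoothOnHalf f) {t ρ z : ℝ} (hρ : 0 < ρ) :
    pdZ (pdT f) t ρ z = pdT (pdZ f) t ρ z := by
  calc pdZ (pdT f) t ρ z
      = fderiv ℝ (toF (pdT f)) (t, ρ, z) ((0:ℝ), (0:ℝ), (1:ℝ)) :=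
        pdZ_eq_fderiv (pdT f) (smooth_pdT f hf) hρ
    _ = fderiv ℝ (fun q => fderiv ℝ (toF f) q ((1:ℝ),(0:ℝ),(0:ℝ))) (t, ρ, z) ((0:ℝ),(0:ℝ),(1:ℝ)) := by
        rw [(ev_pdT f hf hρ).fderiv_eq]
    _ = fderiv ℝ (fun q => fderiv ℝ (toF f) q ((0:ℝ),(0:ℝ),(1:ℝ))) (t, ρ, z) ((1:ℝ),(0:ℝ),(0:ℝ)) :=
        schwarz_gen f hf hρ _ _
    _ = fderiv ℝ (toF (pdZ f)) (t, ρ, z) ((1:ℝ),(0:ℝ),(0:ℝ)) := by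
        rw [(ev_pdZ f hf hρ).fderiv_eq]
    _ = pdT (pdZ f) t ρ z := (pdT_eq_fderiv (pdZ f) (smooth_pdZ f hf) hρ).symm

end Aux2


open Aux Aux2

/-- **Divergence identity for the σ-sector energy density on Minkowski** (Theorem 1(i),
conservation of `m_σ`, pointwise form): for a solution `(σ₁, β₁, χ₁)` of the linearized
equations `(E1)`, `(M)`, `(S)`, the density
`ε_σ = (2p² + 2|∂σ₁|² + 4ρ⁻²χ₁^{AB}χ₁_{AB})ρ` satisfies `∂_t ε_σ = ∂_A t^A` with
`t_A = 4ρ(∂_tσ₁)∂_Aσ₁ + 8β₁^B∂_tχ₁_{AB}`. -/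
theorem stmt_6 (σ₁ : F3) (β₁ : Fin 2 → F3) (χ₁ : Fin 2 → Fin 2 → F3)
    (hσ : SmoothOnHalf σ₁) (hβ : ∀ A, SmoothOnHalf (β₁ A))
    (hχ : ∀ A B, SmoothOnHalf (χ₁ A B))
    (hsym : ∀ A B, χ₁ A B = χ₁ B A)
    (htrace : ∀ t ρ z : ℝ, 0 < ρ → ∑ A, χ₁ A A t ρ z = 0)
    (p : F3) (hp : p = fun t ρ z => pdT σ₁ t ρ z - 2 * β₁ 0 t ρ z / ρ)
    (hE1 : ∀ t ρ z : ℝ, 0 < ρ → -pdT p t ρ z + lap3 σ₁ t ρ z = 0)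
    (hM : ∀ A, ∀ t ρ z : ℝ, 0 < ρ →
      ∑ B, pdA B (χ₁ A B) t ρ z = -(p t ρ z) * (if A = 0 then 1 else 0))
    (hS : ∀ A B, ∀ t ρ z : ℝ, 0 < ρ →
      pdA A (β₁ B) t ρ z + pdA B (β₁ A) t ρ z
          - (if A = B then (1 : ℝ) else 0) * ∑ C, pdA C (β₁ C) t ρ z
        = 2 * ρ⁻¹ * χ₁ A B t ρ z) :
    ∀ t ρ z : ℝ, 0 < ρ →
      pdT (fun t ρ z =>
          (2 * (p t ρ z) ^ 2 + 2 * ((pdR σ₁ t ρ z) ^ 2 + (pdZ σ₁ t ρ z) ^ 2)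
            + 4 * (ρ ^ 2)⁻¹ * ∑ A, ∑ B, (χ₁ A B t ρ z) ^ 2) * ρ) t ρ z
      = ∑ A, pdA A (fun t ρ z =>
          4 * ρ * pdT σ₁ t ρ z * pdA A σ₁ t ρ z
            + 8 * ∑ B, β₁ B t ρ z * pdT (χ₁ A B) t ρ z) t ρ z := by
  intro t ρ z hρ
  have pdA0 : pdA 0 = pdR := by simp [pdA]
  have pdA1 : pdA 1 = pdZ := by simp [pdA]
  -- smoothness of p
  have hpS : SmoothOnHalf p := by
    rw [hp]
    exact (smooth_pdT σ₁ hσ).sub ((contDiffOn_const.mul (hβ 0)).div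
      ((contDiff_fst.comp contDiff_snd).contDiffOn) (fun q hq => ne_of_gt hq))
  have hσT := smooth_pdT σ₁ hσ
  have hσR := smooth_pdR σ₁ hσ
  have hσZ := smooth_pdZ σ₁ hσ
  -- pointwise facts
  have f2 : p t ρ z = pdT σ₁ t ρ z - 2 * β₁ 0 t ρ z / ρ := by rw [hp]
  have f1 : pdT p t ρ z = pdR (pdR σ₁) t ρ z + pdZ (pdZ σ₁) t ρ z + ρ⁻¹ * pdR σ₁ t ρ z := by
    have h := hE1 t ρ z hρ
    simp only [lap3] at h
    linarith
  have s3 : pdR (pdT σ₁) t ρ z = pdT (pdR σ₁) t ρ z := schwarz_TR σ₁ hσ hρ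
  have s4 : pdZ (pdT σ₁) t ρ z = pdT (pdZ σ₁) t ρ z := schwarz_TZ σ₁ hσ hρ
  have s00 : pdR (pdT (χ₁ 0 0)) t ρ z = pdT (pdR (χ₁ 0 0)) t ρ z := schwarz_TR _ (hχ 0 0) hρ
  have s01R : pdR (pdT (χ₁ 0 1)) t ρ z = pdT (pdR (χ₁ 0 1)) t ρ z := schwarz_TR _ (hχ 0 1) hρ
  have s01Z : pdZ (pdT (χ₁ 0 1)) t ρ z = pdT (pdZ (χ₁ 0 1)) t ρ z := schwarz_TZ _ (hχ 0 1) hρ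
  have s11Z : pdZ (pdT (χ₁ 1 1)) t ρ z = pdT (pdZ (χ₁ 1 1)) t ρ z := schwarz_TZ _ (hχ 1 1) hρ
  -- momentum constraint, differentiated in time
  have g0 : ∀ s : ℝ, pdR (χ₁ 0 0) s ρ z + pdZ (χ₁ 0 1) s ρ z = -(p s ρ z) := by
    intro s
    have h := hM 0 s ρ z hρ
    simpa [Fin.sum_univ_two, pdA0, pdA1] using h
  have g1 : ∀ s : ℝ, pdR (χ₁ 0 1) s ρ z + pdZ (χ₁ 1 1) s ρ z = 0 := by
    intro s
    have h := hM 1 s ρ z hρ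
    simp only [Fin.sum_univ_two, pdA0, pdA1, hsym 1 0] at h
    simpa using h
  have f5 : pdT (pdR (χ₁ 0 0)) t ρ z = -(pdT p t ρ z) - pdT (pdZ (χ₁ 0 1)) t ρ z := by
    have H1 : HasDerivAt (fun s => pdR (χ₁ 0 0) s ρ z + pdZ (χ₁ 0 1) s ρ z)
        (pdT (pdR (χ₁ 0 0)) t ρ z + pdT (pdZ (χ₁ 0 1)) t ρ z) t :=
      (hasDerivT _ (smooth_pdR _ (hχ 0 0)) hρ).add (hasDerivT _ (smooth_pdZ _ (hχ 0 1)) hρ)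
    have H2 : HasDerivAt (fun s => pdR (χ₁ 0 0) s ρ z + pdZ (χ₁ 0 1) s ρ z)
        (-(pdT p t ρ z)) t :=
      ((hasDerivT p hpS hρ).neg).congr_of_eventuallyEq
        (Filter.Eventually.of_forall fun s => g0 s)
    have := H1.unique H2
    linarith
  have f6 : pdT (pdR (χ₁ 0 1)) t ρ z = -(pdT (pdZ (χ₁ 1 1)) t ρ z) := by
    have H1 : HasDerivAt (fun s => pdR (χ₁ 0 1) s ρ z + pdZ (χ₁ 1 1) s ρ z)
        (pdT (pdR (χ₁ 0 1)) t ρ z + pdT (pdZ (χ₁ 1 1)) t ρ z) t :=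
      (hasDerivT _ (smooth_pdR _ (hχ 0 1)) hρ).add (hasDerivT _ (smooth_pdZ _ (hχ 1 1)) hρ)
    have H2 : HasDerivAt (fun s => pdR (χ₁ 0 1) s ρ z + pdZ (χ₁ 1 1) s ρ z) (0 : ℝ) t :=
      (hasDerivAt_const t (0 : ℝ)).congr_of_eventuallyEq
        (Filter.Eventually.of_forall fun s => g1 s)
    have := H1.unique H2
    linarith
  -- trace conditions
  have gtr : ∀ s : ℝ, χ₁ 0 0 s ρ z + χ₁ 1 1 s ρ z = 0 := by
    intro s
    simpa [Fin.sum_univ_two] using htrace s ρ z hρ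
  have f7 : χ₁ 1 1 t ρ z = -(χ₁ 0 0 t ρ z) := by
    have := gtr t; linarith
  have f8 : pdT (χ₁ 1 1) t ρ z = -(pdT (χ₁ 0 0) t ρ z) := by
    have H1 : HasDerivAt (fun s => χ₁ 0 0 s ρ z + χ₁ 1 1 s ρ z)
        (pdT (χ₁ 0 0) t ρ z + pdT (χ₁ 1 1) t ρ z) t :=
      (hasDerivT _ (hχ 0 0) hρ).add (hasDerivT _ (hχ 1 1) hρ)
    have H2 : HasDerivAt (fun s => χ₁ 0 0 s ρ z + χ₁ 1 1 s ρ z) (0 : ℝ) t :=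
      (hasDerivAt_const t (0 : ℝ)).congr_of_eventuallyEq
        (Filter.Eventually.of_forall fun s => gtr s)
    have := H1.unique H2
    linarith
  -- the shift equation
  have g9 : pdR (β₁ 0) t ρ z = pdZ (β₁ 1) t ρ z + 2 * ρ⁻¹ * χ₁ 0 0 t ρ z := by
    have h := hS 0 0 t ρ z hρ
    simp [Fin.sum_univ_two, pdA0, pdA1] at h
    linarith
  have g10 : pdR (β₁ 1) t ρ z = 2 * ρ⁻¹ * χ₁ 0 1 t ρ z - pdZ (β₁ 0) t ρ z := by
    have h := hS 0 1 t ρ z hρ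
    simp [Fin.sum_univ_two, pdA0, pdA1] at h
    linarith
  -- expand the sums in the goal
  simp only [Fin.sum_univ_two]
  rw [hsym 1 0]
  simp only [pdA0, pdA1]
  -- derivative computations
  have Hp := hasDerivT p hpS (t := t) (z := z) hρ
  have HSr := hasDerivT (pdR σ₁) hσR (t := t) (z := z) hρ
  have HSz := hasDerivT (pdZ σ₁) hσZ (t := t) (z := z) hρ
  have HA := hasDerivT (χ₁ 0 0) (hχ 0 0) (t := t) (z := z) hρ
  have HB := hasDerivT (χ₁ 0 1) (hχ 0 1) (t := t) (z := z) hρ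
  have HC := hasDerivT (χ₁ 1 1) (hχ 1 1) (t := t) (z := z) hρ
  have HL : HasDerivAt (fun s =>
        (2 * (p s ρ z) ^ 2 + 2 * ((pdR σ₁ s ρ z) ^ 2 + (pdZ σ₁ s ρ z) ^ 2)
          + 4 * (ρ ^ 2)⁻¹ * ((χ₁ 0 0 s ρ z) ^ 2 + (χ₁ 0 1 s ρ z) ^ 2
              + ((χ₁ 0 1 s ρ z) ^ 2 + (χ₁ 1 1 s ρ z) ^ 2))) * ρ)
      ((4 * p t ρ z * pdT p t ρ z
        + 4 * pdR σ₁ t ρ z * pdT (pdR σ₁) t ρ z + 4 * pdZ σ₁ t ρ z * pdT (pdZ σ₁) t ρ z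
        + 4 * (ρ ^ 2)⁻¹ * (2 * χ₁ 0 0 t ρ z * pdT (χ₁ 0 0) t ρ z
            + 4 * χ₁ 0 1 t ρ z * pdT (χ₁ 0 1) t ρ z
            + 2 * χ₁ 1 1 t ρ z * pdT (χ₁ 1 1) t ρ z)) * ρ) t := by
    have H := ((((Hp.pow 2).const_mul 2).add
        (((HSr.pow 2).add (HSz.pow 2)).const_mul 2)).add
        ((((HA.pow 2).add (HB.pow 2)).add ((HB.pow 2).add (HC.pow 2))).const_mul
          (4 * (ρ ^ 2)⁻¹))).mul_const ρ
    exact H.congr_deriv (by push_cast; ring)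
  have HR0 : HasDerivAt (fun s =>
        4 * s * pdT σ₁ t s z * pdR σ₁ t s z
          + 8 * (β₁ 0 t s z * pdT (χ₁ 0 0) t s z + β₁ 1 t s z * pdT (χ₁ 0 1) t s z))
      (4 * pdT σ₁ t ρ z * pdR σ₁ t ρ z
        + 4 * ρ * pdR (pdT σ₁) t ρ z * pdR σ₁ t ρ z
        + 4 * ρ * pdT σ₁ t ρ z * pdR (pdR σ₁) t ρ z
        + 8 * (pdR (β₁ 0) t ρ z * pdT (χ₁ 0 0) t ρ z
            + β₁ 0 t ρ z * pdR (pdT (χ₁ 0 0)) t ρ z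
            + pdR (β₁ 1) t ρ z * pdT (χ₁ 0 1) t ρ z
            + β₁ 1 t ρ z * pdR (pdT (χ₁ 0 1)) t ρ z)) ρ := by
    have H := ((((hasDerivAt_id ρ).const_mul 4).mul (hasDerivR (pdT σ₁) hσT (t := t) (z := z) hρ)).mul
        (hasDerivR (pdR σ₁) hσR (t := t) (z := z) hρ)).add
        ((((hasDerivR (β₁ 0) (hβ 0) (t := t) (z := z) hρ).mul
            (hasDerivR (pdT (χ₁ 0 0)) (smooth_pdT _ (hχ 0 0)) (t := t) (z := z) hρ)).add
          ((hasDerivR (β₁ 1) (hβ 1) (t := t) (z := z) hρ).mul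
            (hasDerivR (pdT (χ₁ 0 1)) (smooth_pdT _ (hχ 0 1)) (t := t) (z := z) hρ))).const_mul 8)
    exact H.congr_deriv (by simp only [id_eq, Pi.mul_apply]; ring)
  have HR1 : HasDerivAt (fun s =>
        4 * ρ * pdT σ₁ t ρ s * pdZ σ₁ t ρ s
          + 8 * (β₁ 0 t ρ s * pdT (χ₁ 0 1) t ρ s + β₁ 1 t ρ s * pdT (χ₁ 1 1) t ρ s))
      (4 * ρ * pdZ (pdT σ₁) t ρ z * pdZ σ₁ t ρ z
        + 4 * ρ * pdT σ₁ t ρ z * pdZ (pdZ σ₁) t ρ z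
        + 8 * (pdZ (β₁ 0) t ρ z * pdT (χ₁ 0 1) t ρ z
            + β₁ 0 t ρ z * pdZ (pdT (χ₁ 0 1)) t ρ z
            + pdZ (β₁ 1) t ρ z * pdT (χ₁ 1 1) t ρ z
            + β₁ 1 t ρ z * pdZ (pdT (χ₁ 1 1)) t ρ z)) z := by
    have H := (((hasDerivZ (pdT σ₁) hσT (t := t) (z := z) hρ).const_mul (4 * ρ)).mul
        (hasDerivZ (pdZ σ₁) hσZ (t := t) (z := z) hρ)).add
        ((((hasDerivZ (β₁ 0) (hβ 0) (t := t) (z := z) hρ).mul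
            (hasDerivZ (pdT (χ₁ 0 1)) (smooth_pdT _ (hχ 0 1)) (t := t) (z := z) hρ)).add
          ((hasDerivZ (β₁ 1) (hβ 1) (t := t) (z := z) hρ).mul
            (hasDerivZ (pdT (χ₁ 1 1)) (smooth_pdT _ (hχ 1 1)) (t := t) (z := z) hρ))).const_mul 8)
    exact H.congr_deriv (by ring)
  refine Eq.trans HL.deriv ?_
  refine Eq.trans ?_ (congrArg₂ (· + ·) HR0.deriv HR1.deriv).symm
  rw [s3, s4, s00, s01R, s01Z, s11Z, f5, f6, g9, g10, f7, f8, f2, f1]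
  field_simp
  ring
end
end
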